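/- arXiv:1304.5714 — 7 statements merged into one kernel-verified Lean document; each statement's English description precedes it below -/
import Mathlib

section
/- For every finite nonempty set C there exists a constant m (depending only on |C|) such that for any sequence f_1, ..., f_m of transformations of C, there exist indices 1 ≤ j ≤ k ≤ m such that the composite f_j ∘ f_{j+1} ∘ ... ∘ f_k (in the order of the sequence, acting on the right) is idempotent. -/
/-- The composite of the transformations `f j, f (j+1), …, f k`, applied in order
(acting on the right, i.e. `(fg)(q) = g(f(q))`). -/
def applySeq {C : Type*} (f : ℕ → C → C) (j k : ℕ) : C → C :=
  fun q => (List.Ico j (k + 1)).foldl (fun x i => f i x) q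

/-- Ramsey bound for monochromatic triangles with `r` colors. -/
def ramseyTri : ℕ → ℕ
  | 0 => 2
  | r + 1 => (r + 1) * ramseyTri r + 2

lemma applySeq_split {C : Type*} (f : ℕ → C → C) {j k l : ℕ}
    (h1 : j ≤ k + 1) (h2 : k ≤ l) (q : C) :
    applySeq f j l q = applySeq f (k + 1) l (applySeq f j k q) := by
  unfold applySeq
  rw [← List.foldl_append, List.Ico.append_consecutive h1 (by omega)]

/-- Finite multicolor Ramsey theorem for monochromatic triangles. -/
lemma ramsey_triangle {G : Type*} [DecidableEq G] :
    ∀ (n : ℕ) (s : Finset G), s.card = n → ∀ (col : ℕ → ℕ → G) (S : Finset ℕ),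
      (∀ a ∈ S, ∀ b ∈ S, a < b → col a b ∈ s) → ramseyTri n ≤ S.card →
      ∃ a ∈ S, ∃ b ∈ S, ∃ c ∈ S, a < b ∧ b < c ∧ col a b = col b c ∧ col a b = col a c := by
  intro n
  induction n with
  | zero =>
    intro s hs col S hcol hcard
    -- S has at least two elements, giving a pair whose color lies in ∅.
    rw [Finset.card_eq_zero] at hs
    subst hs
    have h2 : 1 < S.card := by
      have : ramseyTri 0 = 2 := rfl
      omega
    obtain ⟨a, ha, b, hb, hab⟩ := Finset.one_lt_card.mp h2
    rcases lt_or_gt_of_ne hab with h | h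
    · exact absurd (hcol a ha b hb h) (Finset.notMem_empty _)
    · exact absurd (hcol b hb a ha h) (Finset.notMem_empty _)
  | succ r ih =>
    intro s hs col S hcol hcard
    have hN : ramseyTri (r + 1) = (r + 1) * ramseyTri r + 2 := rfl
    have hSne : S.Nonempty := Finset.card_pos.mp (by omega)
    set v := S.min' hSne with hv
    have hvS : v ∈ S := S.min'_mem hSne
    set S' := S.erase v with hS'
    have hS'card : S'.card = S.card - 1 := Finset.card_erase_of_mem hvS
    have hvlt : ∀ w ∈ S', v < w := by
      intro w hw
      have hwS : w ∈ S := Finset.mem_of_mem_erase hw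
      have hwv : w ≠ v := Finset.ne_of_mem_erase hw
      exact lt_of_le_of_ne (S.min'_le w hwS) (Ne.symm hwv)
    -- pigeonhole: some color class of edges from v is large
    have hmaps : ∀ w ∈ S', col v w ∈ s := fun w hw =>
      hcol v hvS w (Finset.mem_of_mem_erase hw) (hvlt w hw)
    have hmul : s.card * ramseyTri r < S'.card := by
      rw [hs, hS'card]; omega
    obtain ⟨c0, hc0s, hc0⟩ :=
      Finset.exists_lt_card_fiber_of_mul_lt_card_of_maps_to hmaps hmul
    set T := S'.filter (fun w => col v w = c0) with hT
    have hTS' : T ⊆ S' := Finset.filter_subset _ _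
    have hTS : T ⊆ S := hTS'.trans (Finset.erase_subset _ _)
    by_cases hedge : ∃ a ∈ T, ∃ b ∈ T, a < b ∧ col a b = c0
    · obtain ⟨a, haT, b, hbT, hab, habc⟩ := hedge
      have hva : col v a = c0 := (Finset.mem_filter.mp haT).2
      have hvb : col v b = c0 := (Finset.mem_filter.mp hbT).2
      refine ⟨v, hvS, a, hTS haT, b, hTS hbT, hvlt a (hTS' haT), hab, ?_, ?_⟩
      · rw [hva, habc]
      · rw [hva, hvb]
    · push_neg at hedge
      have hcol' : ∀ a ∈ T, ∀ b ∈ T, a < b → col a b ∈ s.erase c0 := by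
        intro a ha b hb hab
        refine Finset.mem_erase.mpr ⟨hedge a ha b hb hab, ?_⟩
        exact hcol a (hTS ha) b (hTS hb) hab
      have hscard : (s.erase c0).card = r := by
        rw [Finset.card_erase_of_mem hc0s, hs]
        omega
      obtain ⟨a, ha, b, hb, c, hc, h⟩ :=
        ih (s.erase c0) hscard col T hcol' (le_of_lt hc0)
      exact ⟨a, hTS ha, b, hTS hb, c, hTS hc, h⟩

theorem exists_idempotent_factor_of_transformations
    (C : Type*) [Fintype C] [Nonempty C] :
    ∃ m : ℕ, 0 < m ∧ ∀ f : ℕ → C → C, ∃ j k : ℕ, 1 ≤ j ∧ j ≤ k ∧ k ≤ m ∧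
      applySeq f j k ∘ applySeq f j k = applySeq f j k := by
  classical
  set n := Fintype.card (C → C) with hn
  refine ⟨ramseyTri n, ?_, ?_⟩
  · -- ramseyTri n ≥ 2 > 0
    have : ∀ r, 2 ≤ ramseyTri r := by
      intro r
      induction r with
      | zero => exact le_refl 2
      | succ r ih => show 2 ≤ (r + 1) * ramseyTri r + 2; omega
    have := this n
    omega
  · intro f
    obtain ⟨a, ha, b, hb, c, hc, hab, hbc, h1, h2⟩ :=
      ramsey_triangle n (Finset.univ : Finset (C → C)) rfl
        (fun a b => applySeq f (a + 1) b) (Finset.range (ramseyTri n + 1))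
        (fun _ _ _ _ _ => Finset.mem_univ _) (by rw [Finset.card_range]; omega)
    rw [Finset.mem_range] at ha hb hc
    refine ⟨a + 1, b, by omega, by omega, by omega, ?_⟩
    funext q
    have key : applySeq f (a + 1) c q
        = applySeq f (b + 1) c (applySeq f (a + 1) b q) :=
      applySeq_split f (by omega) (by omega) q
    calc (applySeq f (a + 1) b ∘ applySeq f (a + 1) b) q
        = applySeq f (b + 1) c (applySeq f (a + 1) b q) := by
          rw [Function.comp_apply, h1]
      _ = applySeq f (a + 1) c q := key.symm
      _ = applySeq f (a + 1) b q := by rw [← h2]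
end

section
/- Let Q be a finite set with n elements, p ∈ Q, and let T_p be a set of transformations of Q closed under composition such that every t ∈ T_p is non-permutational with unique fixed point p. Then |T_p| ≤ (n-1)!. -/
/-- A transformation `f : Q → Q` is non-permutational if there is no subset `D ⊆ Q`
with `|D| > 1` mapped into itself on which `f` restricts to a bijection of `D`. -/
def NonPermutational {Q : Type*} (f : Q → Q) : Prop :=
  ¬ ∃ D : Set Q, 1 < D.ncard ∧ Set.BijOn f D D

theorem card_transformations_with_fixed_point_le {Q : Type*} [Fintype Q]
    (n : ℕ) (hn : Fintype.card Q = n) (p : Q) (T : Set (Q → Q))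
    (hcomp : ∀ s ∈ T, ∀ t ∈ T, (fun q => t (s q)) ∈ T)
    (hnp : ∀ t ∈ T, NonPermutational t)
    (hfix : ∀ t ∈ T, t p = p ∧ ∀ q : Q, t q = q → q = p) :
    T.ncard ≤ Nat.factorial (n - 1) := by
  classical
  subst hn
  set N := Fintype.card Q with hN
  have hn0 : 0 < N := Fintype.card_pos_iff.mpr ⟨p⟩
  -- the relation: q₁ → q₂ if q₁ ≠ p and some t ∈ T maps q₁ to q₂, plus edges to p
  set r : Q → Q → Prop := fun a b => a ≠ p ∧ ((∃ t ∈ T, t a = b) ∨ b = p) with hr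
  have key : ∀ a b, Relation.TransGen r a b → a ≠ p ∧ (b = p ∨ ∃ s ∈ T, s a = b) := by
    intro a b h
    induction h with
    | single h =>
      refine ⟨h.1, ?_⟩
      rcases h.2 with ⟨t, ht, hta⟩ | hb
      · exact Or.inr ⟨t, ht, hta⟩
      · exact Or.inl hb
    | tail hab hbc ih =>
      refine ⟨ih.1, ?_⟩
      rcases ih.2 with hbp | ⟨s, hs, hsa⟩
      · exact absurd hbp hbc.1
      · rcases hbc.2 with ⟨t, ht, htb⟩ | hcp
        · exact Or.inr ⟨fun q => t (s q), hcomp s hs t ht, by show t (s a) = _; rw [hsa, htb]⟩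
        · exact Or.inl hcp
  have hirr : ∀ a, ¬ Relation.TransGen r a a := by
    intro a h
    obtain ⟨hap, h2⟩ := key a a h
    rcases h2 with h2 | ⟨s, hs, hsa⟩
    · exact hap h2
    · exact hap ((hfix s hs).2 a hsa)
  haveI : IsPartialOrder Q (Relation.ReflTransGen r) :=
    { refl := fun a => Relation.ReflTransGen.refl
      trans := fun a b c hab hbc => hab.trans hbc
      antisymm := by
        intro a b hab hba
        by_contra hne
        rcases Relation.reflTransGen_iff_eq_or_transGen.mp hab with h | h
        · exact hne h.symm
        · exact hirr b (Relation.TransGen.trans_right hba h) }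
  obtain ⟨le, hlin, hext⟩ := extend_partialOrder (Relation.ReflTransGen r)
  haveI := hlin
  letI : LinearOrder Q :=
    { le := le
      le_refl := fun a => refl_of le a
      le_trans := fun a b c => trans_of le
      le_antisymm := fun a b => antisymm_of le
      le_total := fun a b => total_of le a b
      toDecidableLE := fun a b => Classical.propDecidable _
      toDecidableEq := fun a b => Classical.propDecidable _
      toDecidableLT := fun a b => Classical.propDecidable _ }
  have hle_r : ∀ a b : Q, r a b → a ≤ b := fun a b h =>
    hext a b (Relation.ReflTransGen.single h)
  have htop : ∀ q : Q, q ≤ p := by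
    intro q
    by_cases hq : q = p
    · exact hq ▸ le_refl p
    · exact hle_r q p ⟨hq, Or.inr rfl⟩
  have hlt : ∀ t ∈ T, ∀ q : Q, q ≠ p → q < t q := by
    intro t ht q hq
    have h1 : q ≤ t q := hle_r q (t q) ⟨hq, Or.inl ⟨t, ht, rfl⟩⟩
    have h2 : q ≠ t q := fun h => hq ((hfix t ht).2 q h.symm)
    exact lt_of_le_of_ne h1 h2
  -- the order isomorphism with Fin N
  let e : Q ≃o Fin N := (monoEquivOfFin Q rfl).symm
  have hep : (e p : ℕ) = N - 1 := by
    have h1 : ∀ i : Fin N, i ≤ e p := by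
      intro i
      have := e.le_iff_le.mpr (htop (e.symm i))
      simpa using this
    have h2 := h1 ⟨N - 1, Nat.sub_lt hn0 one_pos⟩
    have h3 : (e p : ℕ) ≤ N - 1 := Nat.le_sub_one_of_lt (e p).isLt
    exact le_antisymm h3 h2
  -- injection into a product type
  have hGinj : Function.Injective
      (fun (t : T) (q : {q : Q // q ≠ p}) =>
        (⟨t.1 q.1, hlt t.1 t.2 q.1 q.2⟩ : {x : Q // q.1 < x})) := by
    intro t t' h
    apply Subtype.ext
    funext q
    by_cases hq : q = p
    · rw [hq, (hfix t.1 t.2).1, (hfix t'.1 t'.2).1]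
    · have := congrFun h ⟨q, hq⟩
      exact congrArg Subtype.val this
  have hcard : T.ncard ≤ Fintype.card (∀ q : {q : Q // q ≠ p}, {x : Q // q.1 < x}) := by
    rw [← Nat.card_coe_set_eq]
    calc Nat.card T ≤ Nat.card (∀ q : {q : Q // q ≠ p}, {x : Q // q.1 < x}) :=
          Nat.card_le_card_of_injective _ hGinj
      _ = _ := Nat.card_eq_fintype_card
  refine hcard.trans ?_
  rw [Fintype.card_pi]
  -- compute each factor
  have hfac : ∀ q : Q, Fintype.card {x : Q // q < x} = N - 1 - (e q : ℕ) := by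
    intro q
    rw [Fintype.card_congr (Equiv.subtypeEquiv e.toEquiv (fun x => (e.lt_iff_lt).symm))]
    rw [Fintype.card_congr (Equiv.subtypeEquivRight (fun j => (Finset.mem_Ioi (a := e q)).symm))]
    rw [Fintype.card_coe, Fin.card_Ioi]
  have step1 : ∏ q : {q : Q // q ≠ p}, Fintype.card {x : Q // q.1 < x}
      = ∏ q : {q : Q // q ≠ p}, (N - 1 - (e q.1 : ℕ)) :=
    Finset.prod_congr rfl (fun q _ => hfac q.1)
  rw [step1]
  -- reindex via e
  have step2 : ∏ q : {q : Q // q ≠ p}, (N - 1 - (e q.1 : ℕ))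
      = ∏ i : {i : Fin N // i ≠ e p}, (N - 1 - (i.1 : ℕ)) := by
    exact Fintype.prod_equiv
      (Equiv.subtypeEquiv (q := fun i => i ≠ e p) e.toEquiv
        (fun q => not_congr e.toEquiv.apply_eq_iff_eq.symm)) _ _ (fun q => rfl)
  rw [step2]
  have step3 : ∏ i : {i : Fin N // i ≠ e p}, (N - 1 - (i.1 : ℕ))
      = ∏ i ∈ Finset.univ.erase (e p), (N - 1 - (i : ℕ)) := by
    exact (Finset.prod_subtype (p := fun i => i ≠ e p) (Finset.univ.erase (e p))
      (fun x => by simp) (fun i => N - 1 - (i : ℕ))).symm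
  rw [step3]
  have step4 : ∏ i ∈ Finset.univ.erase (e p), (N - 1 - (i : ℕ))
      = ∏ j ∈ Finset.range (N - 1), (N - 1 - j) := by
    refine Finset.prod_bij (fun a _ => (a : ℕ)) ?_ ?_ ?_ ?_
    · intro a ha
      rw [Finset.mem_erase] at ha
      have h1 : (a : ℕ) ≠ N - 1 := by
        intro h
        exact ha.1 (Fin.ext (by rw [h, hep]))
      have h2 : (a : ℕ) < N := a.isLt
      refine Finset.mem_range.mpr ?_
      show (a : ℕ) < N - 1
      omega
    · intro a _ b _ h
      exact Fin.ext h
    · intro b hb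
      rw [Finset.mem_range] at hb
      refine ⟨⟨b, by omega⟩, ?_, rfl⟩
      rw [Finset.mem_erase]
      refine ⟨?_, Finset.mem_univ _⟩
      intro h
      have hb2 : (b : ℕ) = (e p : ℕ) := congrArg Fin.val h
      omega
    · intro a _; rfl
  rw [step4]
  have step5 : ∏ j ∈ Finset.range (N - 1), (N - 1 - j)
      = ∏ j ∈ Finset.range (N - 1), ((N - 1) - 1 - j + 1) := by
    refine Finset.prod_congr rfl (fun j hj => ?_)
    rw [Finset.mem_range] at hj
    omega
  rw [step5, Finset.prod_range_reflect (fun j => j + 1) (N - 1),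
    Finset.prod_range_add_one_eq_factorial]
end

section
/- Let Q be a finite set with n elements and let T be a subsemigroup of the full transformation semigroup on Q all of whose elements are non-permutational. Then |T| ≤ n!. -/
section Aux
open Function Set Relation

variable {Q : Type*} [Fintype Q]

/-- Two fixed points of a non-permutational map coincide. -/
lemma np_fix_unique {t : Q → Q} (h : NonPermutational t) {a b : Q}
    (ha : t a = a) (hb : t b = b) : a = b := by
  by_contra hne
  apply h
  refine ⟨{a, b}, ?_, ?_, ?_, ?_⟩
  · rw [Set.ncard_pair hne]; norm_num
  · rintro x (rfl | rfl) <;> simp [ha, hb]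
  · rintro x (rfl | rfl) y (rfl | rfl) hxy <;> simp_all [ha, hb]
  · rintro x (rfl | rfl)
    · exact ⟨x, by simp, ha⟩
    · exact ⟨x, by simp, hb⟩

/-- Every point reaches a fixed point under iteration of a non-permutational map. -/
lemma np_reach {t : Q → Q} (h : NonPermutational t) (x : Q) :
    ∃ k p, t^[k] x = p ∧ t p = p := by
  obtain ⟨i, j, heq, hij⟩ : ∃ i j : ℕ, t^[i] x = t^[j] x ∧ i < j := by
    obtain ⟨i, j, hne, heq⟩ := Finite.exists_ne_map_eq_of_infinite (fun k : ℕ => t^[k] x)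
    rcases hne.lt_or_gt with h' | h'
    · exact ⟨i, j, heq, h'⟩
    · exact ⟨j, i, heq.symm, h'⟩
  set p := t^[i] x with hp
  set m := j - i with hm
  have hm1 : 1 ≤ m := by omega
  have hper : t^[m] p = p := by
    rw [hp, ← Function.iterate_add_apply]
    have hmi : m + i = j := by omega
    rw [hmi]
    exact heq.symm
  set D : Set Q := Set.range fun k => t^[k] p with hD
  have hmaps : MapsTo t D D := by
    rintro y ⟨k, rfl⟩
    refine ⟨k + 1, ?_⟩
    show t^[k + 1] p = t (t^[k] p)
    exact Function.iterate_succ_apply' t k p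
  have hsurj : SurjOn t D D := by
    rintro y ⟨k, rfl⟩
    refine ⟨t^[k + m - 1] p, ⟨k + m - 1, rfl⟩, ?_⟩
    show t (t^[k + m - 1] p) = t^[k] p
    have h1 : k + m - 1 + 1 = k + m := by omega
    calc t (t^[k + m - 1] p) = t^[k + m - 1 + 1] p :=
          (Function.iterate_succ_apply' t _ p).symm
    _ = t^[k + m] p := by rw [h1]
    _ = t^[k] (t^[m] p) := Function.iterate_add_apply t k m p
    _ = t^[k] p := by rw [hper]
  have hfin : D.Finite := Set.toFinite D
  have hbij : Set.BijOn t D D := (hfin.surjOn_iff_bijOn_of_mapsTo hmaps).mp hsurj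
  have hle : D.ncard ≤ 1 := by
    by_contra hlt
    exact h ⟨D, lt_of_not_ge hlt, hbij⟩
  have hpD : p ∈ D := ⟨0, rfl⟩
  have htpD : t p ∈ D := hmaps hpD
  have : t p = p := (Set.ncard_le_one hfin).mp hle _ htpD _ hpD
  exact ⟨i, p, rfl, this⟩

/-- A non-permutational map on a nonempty finite type has a fixed point. -/
lemma np_exists_fix [Nonempty Q] {t : Q → Q} (h : NonPermutational t) :
    ∃ p, t p = p := by
  obtain ⟨k, p, _, hp⟩ := np_reach h (Classical.arbitrary Q)
  exact ⟨p, hp⟩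

lemma prod_range_max (m : ℕ) :
    ∏ i ∈ Finset.range (m + 1), max i 1 = Nat.factorial m := by
  induction m with
  | zero => simp
  | succ m ih =>
    rw [Finset.prod_range_succ, ih, Nat.factorial_succ, Nat.mul_comm]
    congr 1
    omega

/-- The class of elements of `T` with fixed point `q` has at most `(n-1)!` elements. -/
lemma np_class_bound {n : ℕ} (hn : Fintype.card Q = n) (hn1 : 1 ≤ n)
    (T : Set (Q → Q))
    (hcomp : ∀ s ∈ T, ∀ t ∈ T, (fun q => t (s q)) ∈ T)
    (hnp : ∀ t ∈ T, NonPermutational t) (q : Q) :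
    {t ∈ T | t q = q}.ncard ≤ Nat.factorial (n - 1) := by
  classical
  set S : Set (Q → Q) := {t ∈ T | t q = q} with hS
  rcases S.eq_empty_or_nonempty with hSe | ⟨t₀, ht₀⟩
  · simp [hSe]
  obtain ⟨ht₀T, ht₀q⟩ := ht₀
  -- the strict "descent" relation
  set below : Q → Q → Prop := fun a b => a ≠ b ∧ ∃ t ∈ T, t q = q ∧ t b = a with hbelow
  set lt : Q → Q → Prop := Relation.TransGen below with hlt
  have L1 : ∀ {a b}, lt a b → ∃ t ∈ T, t q = q ∧ t b = a := by
    intro a b h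
    induction h with
    | single h => exact h.2
    | tail _ hstep ih =>
      obtain ⟨t, htT, htq, hteq⟩ := ih
      obtain ⟨_, s, hsT, hsq, hseq⟩ := hstep
      refine ⟨fun x => t (s x), hcomp s hsT t htT, ?_, ?_⟩
      · simp [hsq, htq]
      · simp [hseq, hteq]
  have Lnotq : ∀ a, ¬ below a q := by
    rintro a ⟨hne, t, _, htq, hta⟩
    exact hne (hta.symm.trans htq)
  have L2 : ∀ x, ¬ lt x x := by
    intro x hx
    by_cases hxq : x = q
    · subst hxq
      cases hx with
      | single h => exact Lnotq _ h
      | tail _ hstep => exact Lnotq _ hstep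
    · obtain ⟨t, htT, htq, htx⟩ := L1 hx
      exact hxq (np_fix_unique (hnp t htT) htx htq)
  have L3 : ∀ t ∈ S, ∀ x, x ≠ q → lt (t x) x := by
    rintro t ⟨htT, htq⟩ x hx
    have hne : t x ≠ x := fun he => hx (np_fix_unique (hnp t htT) he htq)
    exact Relation.TransGen.single ⟨hne, t, htT, htq, rfl⟩
  have Lreach : ∀ x, ∃ k, t₀^[k] x = q := by
    intro x
    obtain ⟨k, p, hk, hp⟩ := np_reach (hnp t₀ ht₀T) x
    exact ⟨k, by rw [hk, np_fix_unique (hnp t₀ ht₀T) hp ht₀q]⟩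
  have L4 : ∀ x, x ≠ q → lt q x := by
    have main : ∀ k, ∀ x, t₀^[k] x = q → x ≠ q → lt q x := by
      intro k
      induction k with
      | zero => intro x h hx; exact absurd h hx
      | succ k ih =>
        intro x h hx
        have h' : t₀^[k] (t₀ x) = q := by
          rw [← Function.iterate_succ_apply]; exact h
        have hstep : t₀ x ≠ x := fun he =>
          hx (np_fix_unique (hnp t₀ ht₀T) he ht₀q)
        by_cases hc : t₀ x = q
        · exact Relation.TransGen.single ⟨Ne.symm hx, t₀, ht₀T, ht₀q, hc⟩
        · exact Relation.TransGen.tail (ih (t₀ x) h' hc) ⟨hstep, t₀, ht₀T, ht₀q, rfl⟩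
    intro x hx
    obtain ⟨k, hk⟩ := Lreach x
    exact main k x hk hx
  -- extend to a linear order
  set le : Q → Q → Prop := fun a b => lt a b ∨ a = b with hle
  haveI : IsPartialOrder Q le :=
    { refl := fun a => Or.inr rfl
      trans := by
        rintro a b c (hab | rfl) (hbc | rfl)
        · exact Or.inl (hab.trans hbc)
        · exact Or.inl hab
        · exact Or.inl hbc
        · exact Or.inr rfl
      antisymm := by
        rintro a b hab hba
        rcases hab with hab | rfl
        · rcases hba with hba | rfl
          · exact absurd (hab.trans hba) (L2 a)
          · rfl
        · rfl }
  obtain ⟨sle, hlin, hsub⟩ := extend_partialOrder le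
  -- rank function
  set rk : Q → ℕ := fun x => (Finset.univ.filter (fun y => sle y x ∧ y ≠ x)).card with hrk
  have rk_mono : ∀ a b, sle a b → a ≠ b → rk a < rk b := by
    intro a b hab hne
    have hsubset : Finset.univ.filter (fun y => sle y a ∧ y ≠ a) ⊆
        Finset.univ.filter (fun y => sle y b ∧ y ≠ b) := by
      intro y hy
      simp only [Finset.mem_filter, Finset.mem_univ, true_and] at hy ⊢
      refine ⟨hlin.trans y a b hy.1 hab, ?_⟩
      rintro rfl
      exact hne (hlin.antisymm a y hab hy.1)
    have hmem : a ∈ Finset.univ.filter (fun y => sle y b ∧ y ≠ b) := by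
      simp only [Finset.mem_filter, Finset.mem_univ, true_and]
      exact ⟨hab, hne⟩
    have hnmem : a ∉ Finset.univ.filter (fun y => sle y a ∧ y ≠ a) := by
      simp
    exact Finset.card_lt_card ((Finset.ssubset_iff_of_subset hsubset).mpr ⟨a, hmem, hnmem⟩)
  have rk_inj : Function.Injective rk := by
    intro a b hab
    by_contra hne
    rcases hlin.total a b with h | h
    · exact absurd hab (Nat.ne_of_lt (rk_mono a b h hne))
    · exact absurd hab.symm (Nat.ne_of_lt (rk_mono b a h (Ne.symm hne)))
  have rk_lt : ∀ x, rk x < n := by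
    intro x
    have : Finset.univ.filter (fun y => sle y x ∧ y ≠ x) ⊆ Finset.univ.erase x := by
      intro y hy
      simp only [Finset.mem_filter, Finset.mem_univ, true_and] at hy
      exact Finset.mem_erase.mpr ⟨hy.2, Finset.mem_univ y⟩
    calc rk x ≤ (Finset.univ.erase x).card := Finset.card_le_card this
    _ < Finset.univ.card := Finset.card_erase_lt_of_mem (Finset.mem_univ x)
    _ = n := by rw [Finset.card_univ, hn]
  have rk_q : rk q = 0 := by
    rw [hrk]
    simp only [Finset.card_eq_zero]
    rw [Finset.filter_eq_empty_iff]
    intro y _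
    rintro ⟨hyq, hne⟩
    have : sle q y := hsub q y (Or.inl (L4 y hne))
    exact hne (hlin.antisymm y q hyq this)
  -- injection into a product of ranges
  have hmapsto : ∀ t ∈ S, ∀ x, rk (t x) < max (rk x) 1 := by
    intro t ht x
    by_cases hx : x = q
    · subst hx
      rw [ht.2, rk_q]
      omega
    · have hlt' : lt (t x) x := L3 t ht x hx
      obtain ⟨hne, -⟩ : t x ≠ x ∧ True := by
        constructor
        · intro he
          rw [he] at hlt'
          exact L2 x hlt'
        · trivial
      have : sle (t x) x := hsub _ _ (Or.inl hlt')
      have := rk_mono (t x) x this hne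
      omega
  set B : Finset (Q → ℕ) := Fintype.piFinset (fun x => Finset.range (max (rk x) 1)) with hB
  have hinj : Set.InjOn (fun (t : Q → Q) (x : Q) => rk (t x)) S := by
    intro t ht t' ht' h
    funext x
    exact rk_inj (congrFun h x)
  have hcard : S.ncard ≤ B.card := by
    rw [← Set.ncard_coe_finset]
    apply Set.ncard_le_ncard_of_injOn _ _ hinj (B.finite_toSet)
    intro t ht
    simp only [Finset.mem_coe, hB, Fintype.mem_piFinset, Finset.mem_range]
    exact hmapsto t ht
  have hBcard : B.card = Nat.factorial (n - 1) := by
    rw [hB, Fintype.card_piFinset]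
    simp only [Finset.card_range]
    have himg : Finset.univ.image rk = Finset.range n := by
      apply Finset.eq_of_subset_of_card_le
      · intro i hi
        simp only [Finset.mem_image] at hi
        obtain ⟨x, _, rfl⟩ := hi
        exact Finset.mem_range.mpr (rk_lt x)
      · rw [Finset.card_range, Finset.card_image_of_injective _ rk_inj,
          Finset.card_univ, hn]
    obtain ⟨m, rfl⟩ : ∃ m, n = m + 1 := ⟨n - 1, by omega⟩
    have h2 : ∏ x : Q, max (rk x) 1 = ∏ i ∈ Finset.range (m + 1), max i 1 := by
      rw [← himg, Finset.prod_image]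
      intro a _ b _ h
      exact rk_inj h
    rw [h2, prod_range_max]
    congr 1
  omega

end Aux

theorem card_nonPermutational_semigroup_le {Q : Type*} [Fintype Q]
    (n : ℕ) (hn : Fintype.card Q = n) (T : Set (Q → Q))
    (hcomp : ∀ s ∈ T, ∀ t ∈ T, (fun q => t (s q)) ∈ T)
    (hnp : ∀ t ∈ T, NonPermutational t) :
    T.ncard ≤ Nat.factorial n := by
  classical
  rcases Nat.eq_zero_or_pos n with rfl | hn1
  · haveI : IsEmpty Q := Fintype.card_eq_zero_iff.mp hn
    haveI : Unique (Q → Q) := ⟨⟨fun x => x⟩, fun f => funext fun x => isEmptyElim x⟩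
    calc T.ncard ≤ (Set.univ : Set (Q → Q)).ncard :=
          Set.ncard_le_ncard (Set.subset_univ T) (Set.finite_univ)
    _ = 1 := by rw [Set.ncard_univ, Nat.card_unique]
    _ ≤ Nat.factorial 0 := by norm_num
  · haveI : Nonempty Q := Fintype.card_pos_iff.mp (hn ▸ hn1)
    have hfinT : T.Finite := Set.toFinite T
    have hsubset : hfinT.toFinset ⊆
        Finset.univ.biUnion (fun q : Q => ({t ∈ T | t q = q} : Set (Q → Q)).toFinset) := by
      intro t ht
      rw [Set.Finite.mem_toFinset] at ht
      obtain ⟨p, hp⟩ := np_exists_fix (hnp t ht)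
      exact Finset.mem_biUnion.mpr ⟨p, Finset.mem_univ p, by
        rw [Set.mem_toFinset]; exact ⟨ht, hp⟩⟩
    calc T.ncard = hfinT.toFinset.card := Set.ncard_eq_toFinset_card T hfinT
    _ ≤ (Finset.univ.biUnion
          (fun q : Q => ({t ∈ T | t q = q} : Set (Q → Q)).toFinset)).card :=
          Finset.card_le_card hsubset
    _ ≤ ∑ q : Q, ({t ∈ T | t q = q} : Set (Q → Q)).toFinset.card :=
          Finset.card_biUnion_le
    _ ≤ ∑ _q : Q, Nat.factorial (n - 1) := by
          apply Finset.sum_le_sum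
          intro q _
          rw [← Set.ncard_eq_toFinset_card']
          exact np_class_bound hn hn1 T hcomp hnp q
    _ = n * Nat.factorial (n - 1) := by
          rw [Finset.sum_const, Finset.card_univ, hn, smul_eq_mul]
    _ = Nat.factorial n := by
          obtain ⟨m, rfl⟩ : ∃ m, n = m + 1 := ⟨n - 1, by omega⟩
          simp [Nat.factorial_succ]
end

section
/- Let A be a reduced (minimal, connected) deterministic finite automaton recognizing a k-definite language L. Then A avoids pattern P_d: there are no two distinct states p, q and a nonempty word x with p·x = p and q·x = q. -/
/-- State `q` is reachable from `p` in the DFA `M`. -/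
def Reach {α σ : Type*} (M : DFA α σ) (p q : σ) : Prop :=
  ∃ x : List α, M.evalFrom p x = q

/-- A DFA is reduced if it is connected and all pairs of distinct states are
distinguishable by some word. -/
def Reduced {α σ : Type*} (M : DFA α σ) : Prop :=
  (∀ q : σ, ∃ x : List α, M.evalFrom M.start x = q) ∧
  (∀ p q : σ, p ≠ q → ∃ w : List α,
    ¬ (M.evalFrom p w ∈ M.accept ↔ M.evalFrom q w ∈ M.accept))

/-- `C` is a strongly connected component (class of mutual reachability) of `M`. -/
def IsComponent {α σ : Type*} (M : DFA α σ) (C : Set σ) : Prop :=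
  ∃ p : σ, C = {q | Reach M p q ∧ Reach M q p}

/-- A component is a sink if it is closed under all letters. -/
def IsSink {α σ : Type*} (M : DFA α σ) (C : Set σ) : Prop :=
  IsComponent M C ∧ ∀ q ∈ C, ∀ a : α, M.step q a ∈ C

/-- A component is trivial if it is a singleton `{p}` with `p·a ≠ p` for every letter `a`. -/
def IsTrivialComponent {α σ : Type*} (M : DFA α σ) (C : Set σ) : Prop :=
  IsComponent M C ∧ ∃ p : σ, C = {p} ∧ ∀ a : α, M.step p a ≠ p

/-- `f` is non-permutational on `C`: no subset `D ⊆ C` with `|D| > 1` is mapped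
bijectively onto itself by `f`. -/
def NonPermutationalOn {σ : Type*} (f : σ → σ) (C : Set σ) : Prop :=
  ¬ ∃ D : Set σ, D ⊆ C ∧ 1 < D.ncard ∧ Set.BijOn f D D

/-- The automaton avoids pattern `P_d`. -/
def AvoidsPd {α σ : Type*} (M : DFA α σ) : Prop :=
  ¬ ∃ (p q : σ) (x : List α), p ≠ q ∧ x ≠ [] ∧
    M.evalFrom p x = p ∧ M.evalFrom q x = q

/-- The automaton avoids pattern `P_g`. -/
def AvoidsPg {α σ : Type*} (M : DFA α σ) : Prop :=
  ¬ ∃ (p q : σ) (x y : List α), p ≠ q ∧ x ≠ [] ∧ y ≠ [] ∧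
    M.evalFrom p x = p ∧ M.evalFrom q x = q ∧ M.evalFrom p y = q

/-- A language is k-definite if membership only depends on the suffix of length k. -/
def IsKDefinite {α : Type*} (k : ℕ) (L : Language α) : Prop :=
  ∀ x y : List α, y.length = k → (x ++ y ∈ L ↔ y ∈ L)

lemma evalFrom_join_replicate {α σ : Type*} (M : DFA α σ) (p : σ) (x : List α)
    (h : M.evalFrom p x = p) : ∀ n : ℕ, M.evalFrom p ((List.replicate n x).flatten) = p
  | 0 => rfl
  | n + 1 => by
    rw [List.replicate_succ, List.flatten_cons, DFA.evalFrom_of_append, h,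
      evalFrom_join_replicate M p x h n]

theorem definite_avoids_Pd {α σ : Type*} (M : DFA α σ) (k : ℕ)
    (hred : Reduced M) (hdef : IsKDefinite k M.accepts) :
    AvoidsPd M := by
  rintro ⟨p, q, x, hpq, hx, hpx, hqx⟩
  obtain ⟨u, hu⟩ := hred.1 p
  obtain ⟨v, hv⟩ := hred.1 q
  obtain ⟨w, hw⟩ := hred.2 p q hpq
  set s : List α := (List.replicate k x).flatten ++ w with hs
  have hslen : k ≤ s.length := by
    have hx1 : 1 ≤ x.length := List.length_pos_iff.mpr hx
    calc k = k * 1 := (mul_one k).symm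
      _ ≤ k * x.length := Nat.mul_le_mul_left k hx1
      _ ≤ s.length := by
          simp [hs, List.length_flatten, List.map_replicate, List.sum_replicate, smul_eq_mul]
  have hdroplen : (s.drop (s.length - k)).length = k := by
    rw [List.length_drop]; omega
  have key : ∀ r : σ, ∀ t : List α, M.evalFrom M.start t = r → M.evalFrom r x = r →
      (t ++ s ∈ M.accepts ↔ M.evalFrom r w ∈ M.accept) := by
    intro r t ht hr
    rw [DFA.mem_accepts]
    show M.evalFrom M.start (t ++ s) ∈ M.accept ↔ _
    rw [DFA.evalFrom_of_append, ht, hs, DFA.evalFrom_of_append,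
      evalFrom_join_replicate M r x hr k]
  have h1 := key p u hu hpx
  have h2 := key q v hv hqx
  have hsplit : ∀ t : List α, t ++ s =
      (t ++ s.take (s.length - k)) ++ s.drop (s.length - k) := by
    intro t; rw [List.append_assoc, List.take_append_drop]
  have hdef1 := hdef (u ++ s.take (s.length - k)) (s.drop (s.length - k)) hdroplen
  have hdef2 := hdef (v ++ s.take (s.length - k)) (s.drop (s.length - k)) hdroplen
  rw [← hsplit u] at hdef1
  rw [← hsplit v] at hdef2
  exact hw (by rw [← h1, ← h2, hdef1, hdef2])
end

section
/- Let A be a reduced DFA such that every nonempty word induces a non-permutational transformation of the state set. Then A has a unique sink component, and every other strongly connected component of A is trivial. -/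
open Function in
private lemma eventually_mem_periodicPts {σ : Type*} [Fintype σ] (f : σ → σ) (s : σ) :
    ∃ m, f^[m] s ∈ periodicPts f := by
  obtain ⟨i, j, hij, h⟩ := Finite.exists_ne_map_eq_of_infinite (fun n : ℕ => f^[n] s)
  rcases hij.lt_or_gt with h' | h'
  · refine ⟨i, mk_mem_periodicPts (Nat.sub_pos_of_lt h') ?_⟩
    show f^[j - i] (f^[i] s) = f^[i] s
    rw [← Function.iterate_add_apply, Nat.sub_add_cancel h'.le]
    exact h.symm
  · refine ⟨j, mk_mem_periodicPts (Nat.sub_pos_of_lt h') ?_⟩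
    show f^[i - j] (f^[j] s) = f^[j] s
    rw [← Function.iterate_add_apply, Nat.sub_add_cancel h'.le]
    exact h

open Function in
private lemma per_subsingleton {σ : Type*} [Fintype σ] {f : σ → σ}
    (hnp : NonPermutationalOn f Set.univ) : (periodicPts f).Subsingleton := by
  intro a ha b hb
  by_contra hne
  exact hnp ⟨periodicPts f, Set.subset_univ _,
    (Set.one_lt_ncard_iff (Set.toFinite _)).2 ⟨a, b, ha, hb, hne⟩, bijOn_periodicPts f⟩

open Function in
private lemma converge_aux {σ : Type*} [Fintype σ] {f : σ → σ}
    (hnp : NonPermutationalOn f Set.univ) {p : σ} (hp : f p = p) (s : σ) :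
    ∃ n, f^[n] s = p := by
  obtain ⟨m, hm⟩ := eventually_mem_periodicPts f s
  exact ⟨m, per_subsingleton hnp hm (mk_mem_periodicPts one_pos hp)⟩

open Function in
private lemma exists_fixed_aux {σ : Type*} [Fintype σ] [Nonempty σ] {f : σ → σ}
    (hnp : NonPermutationalOn f Set.univ) : ∃ p, f p = p := by
  obtain ⟨s⟩ := ‹Nonempty σ›
  obtain ⟨m, hm⟩ := eventually_mem_periodicPts f s
  exact ⟨f^[m] s, per_subsingleton hnp ((bijOn_periodicPts f).mapsTo hm) hm⟩

private lemma reach_refl {α σ : Type*} (M : DFA α σ) (p : σ) : Reach M p p := ⟨[], rfl⟩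

private lemma reach_trans {α σ : Type*} (M : DFA α σ) {p q r : σ}
    (h1 : Reach M p q) (h2 : Reach M q r) : Reach M p r := by
  obtain ⟨u, hu⟩ := h1
  obtain ⟨v, hv⟩ := h2
  exact ⟨u ++ v, by rw [DFA.evalFrom_of_append, hu, hv]⟩

private lemma reach_iterate {α σ : Type*} (M : DFA α σ) (x : List α) (s : σ) (n : ℕ) :
    Reach M s ((fun q => M.evalFrom q x)^[n] s) := by
  induction n with
  | zero => exact reach_refl M s
  | succ n ih =>
    rw [Function.iterate_succ_apply']
    exact reach_trans M ih ⟨x, rfl⟩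

private lemma reach_all {α σ : Type*} [Fintype σ] (M : DFA α σ)
    (hnp : ∀ x : List α, x ≠ [] → NonPermutationalOn (fun q => M.evalFrom q x) Set.univ)
    {p : σ} {x : List α} (hx : x ≠ []) (hp : M.evalFrom p x = p) (s : σ) : Reach M s p := by
  obtain ⟨n, hn⟩ := converge_aux (hnp x hx) (p := p) hp s
  exact hn ▸ reach_iterate M x s n

private lemma sink_of_reach_all {α σ : Type*} (M : DFA α σ) {p : σ}
    (hall : ∀ s, Reach M s p) : IsSink M {q | Reach M p q ∧ Reach M q p} := by
  refine ⟨⟨p, rfl⟩, fun q hq a => ?_⟩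
  exact ⟨reach_trans M hq.1 ⟨[a], rfl⟩, hall _⟩

private lemma class_eq {α σ : Type*} (M : DFA α σ) {p q : σ}
    (hpq : Reach M p q) (hqp : Reach M q p) :
    {r | Reach M p r ∧ Reach M r p} = {r | Reach M q r ∧ Reach M r q} := by
  ext r
  exact ⟨fun h => ⟨reach_trans M hqp h.1, reach_trans M h.2 hpq⟩,
         fun h => ⟨reach_trans M hpq h.1, reach_trans M h.2 hqp⟩⟩

theorem unique_sink_of_nonPermutational {α σ : Type*} [Fintype σ] (M : DFA α σ)
    (hred : Reduced M)
    (hnp : ∀ x : List α, x ≠ [] → NonPermutationalOn (fun q => M.evalFrom q x) Set.univ) :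
    (∃! C : Set σ, IsComponent M C ∧ IsSink M C) ∧
    (∀ C : Set σ, IsComponent M C → ¬ IsSink M C → IsTrivialComponent M C) := by
  classical
  constructor
  · by_cases hα : Nonempty α
    · obtain ⟨a⟩ := hα
      have hσ : Nonempty σ := ⟨M.start⟩
      obtain ⟨r, hr⟩ := exists_fixed_aux (hnp [a] (by simp))
      have hall : ∀ s, Reach M s r := reach_all M hnp (by simp) hr
      refine ⟨{q | Reach M r q ∧ Reach M q r}, ⟨⟨r, rfl⟩, sink_of_reach_all M hall⟩, ?_⟩
      rintro C ⟨⟨p0, rfl⟩, hsink⟩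
      have hp0 : M.step p0 a ∈ {q | Reach M p0 q ∧ Reach M q p0} :=
        hsink.2 p0 ⟨reach_refl M p0, reach_refl M p0⟩ a
      obtain ⟨v, hv⟩ := hp0.2
      have hloop : M.evalFrom p0 (a :: v) = p0 := hv
      have hallp0 : ∀ s, Reach M s p0 := reach_all M hnp (by simp) hloop
      exact class_eq M (hall p0) (hallp0 r)
    · have hsub : ∀ q : σ, q = M.start := by
        intro q
        obtain ⟨x, hx⟩ := hred.1 q
        cases x with
        | nil => exact hx.symm
        | cons b _ => exact absurd ⟨b⟩ hα
      refine ⟨{q | Reach M M.start q ∧ Reach M q M.start},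
        ⟨⟨_, rfl⟩, ⟨_, rfl⟩, fun q _ b => absurd ⟨b⟩ hα⟩, ?_⟩
      rintro C ⟨⟨p0, rfl⟩, _⟩
      rw [hsub p0]
  · rintro C ⟨p0, rfl⟩ hns
    by_contra htriv
    have hp0mem : p0 ∈ {q | Reach M p0 q ∧ Reach M q p0} :=
      ⟨reach_refl M p0, reach_refl M p0⟩
    have hloop : ∃ x : List α, x ≠ [] ∧ M.evalFrom p0 x = p0 := by
      by_cases hC : {q | Reach M p0 q ∧ Reach M q p0} = {p0}
      · have h1 : ¬ ∀ a : α, M.step p0 a ≠ p0 := fun h => htriv ⟨⟨p0, rfl⟩, p0, hC, h⟩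
        push_neg at h1
        obtain ⟨a, ha⟩ := h1
        exact ⟨[a], by simp, ha⟩
      · have h2 : ∃ q ∈ {q | Reach M p0 q ∧ Reach M q p0}, q ≠ p0 := by
          by_contra h
          push_neg at h
          apply hC
          ext q
          exact ⟨fun hq => h q hq, fun hq => hq ▸ hp0mem⟩
        obtain ⟨q, ⟨⟨u, hu⟩, ⟨v, hv⟩⟩, hqne⟩ := h2
        refine ⟨u ++ v, ?_, by rw [DFA.evalFrom_of_append, hu, hv]⟩
        intro h
        obtain ⟨hu0, -⟩ := List.append_eq_nil_iff.mp h
        subst hu0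
        exact hqne (by simpa using hu.symm)
    obtain ⟨x, hx, hpx⟩ := hloop
    exact hns (sink_of_reach_all M (reach_all M hnp hx hpx))
end

section
/- Let A be a DFA with a unique sink component C such that all other components are trivial, and suppose for each nonempty word u the restriction of u's action to C is non-permutational. Then the language L(A) is definite: there exists k such that for all x ∈ Σ* and y ∈ Σ^k, xy ∈ L(A) ⟺ y ∈ L(A). -/
open Classical



/-- Sink components are closed under words. -/
lemma sink_closed {α σ : Type*} (M : DFA α σ) (C : Set σ)
    (hC : ∀ q ∈ C, ∀ a : α, M.step q a ∈ C) :
    ∀ w : List α, ∀ q ∈ C, M.evalFrom q w ∈ C := by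
  intro w
  induction w with
  | nil => intro q hq; simpa [DFA.evalFrom] using hq
  | cons a w ih =>
    intro q hq
    have : M.evalFrom q (a :: w) = M.evalFrom (M.step q a) w := rfl
    rw [this]
    exact ih _ (hC q hq a)

/-- No nonempty loops outside C. -/
lemma no_loop_outside {α σ : Type*} (M : DFA α σ) (C : Set σ)
    (htriv : ∀ D : Set σ, IsComponent M D → D ≠ C → IsTrivialComponent M D)
    (p : σ) (hp : p ∉ C) (w : List α) (hw : w ≠ []) (hloop : M.evalFrom p w = p) :
    False := by
  set D : Set σ := {q | Reach M p q ∧ Reach M q p} with hD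
  have hcomp : IsComponent M D := ⟨p, rfl⟩
  have hpD : p ∈ D := ⟨⟨[], rfl⟩, ⟨[], rfl⟩⟩
  have hne : D ≠ C := fun h => hp (h ▸ hpD)
  obtain ⟨-, r, hDr, hstep⟩ := htriv D hcomp hne
  have hpr : p = r := by
    have := hDr ▸ hpD; simpa using this
  subst hpr
  obtain ⟨a, w', rfl⟩ : ∃ a w', w = a :: w' := by
    cases w with
    | nil => exact absurd rfl hw
    | cons a w' => exact ⟨a, w', rfl⟩
  have h1 : M.evalFrom (M.step p a) w' = p := hloop
  have hmem : M.step p a ∈ D := ⟨⟨[a], rfl⟩, ⟨w', h1⟩⟩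
  have : M.step p a = p := by have := hDr ▸ hmem; simpa using this
  exact hstep a this

/-- After Fintype.card σ steps, every state enters C. -/
lemma enters_sink {α σ : Type*} [Fintype σ] (M : DFA α σ) (C : Set σ)
    (hsink : ∀ q ∈ C, ∀ a : α, M.step q a ∈ C)
    (htriv : ∀ D : Set σ, IsComponent M D → D ≠ C → IsTrivialComponent M D)
    (p : σ) (w : List α) (hw : w.length = Fintype.card σ) :
    M.evalFrom p w ∈ C := by
  set n := Fintype.card σ with hn
  have hpig : ∃ i j : Fin (n + 1), i ≠ j ∧
      M.evalFrom p (w.take i) = M.evalFrom p (w.take j) :=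
    Fintype.exists_ne_map_eq_of_card_lt (fun i : Fin (n+1) => M.evalFrom p (w.take i))
      (by simp; exact hn.ge)
  obtain ⟨i, j, hij, heq⟩ := hpig
  -- WLOG i < j
  wlog hlt : (i : ℕ) < (j : ℕ) generalizing i j
  · have hne' : (i:ℕ) ≠ (j:ℕ) := Fin.val_ne_of_ne hij
    exact this j i hij.symm heq.symm (by omega)
  by_cases hmem : M.evalFrom p (w.take i) ∈ C
  · have hsplit : w = w.take i ++ w.drop i := (List.take_append_drop i w).symm
    have heval : M.evalFrom p w = M.evalFrom (M.evalFrom p (w.take i)) (w.drop i) := by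
      conv_lhs => rw [hsplit]
      exact M.evalFrom_of_append _ _ _
    rw [heval]
    exact sink_closed M C hsink _ _ hmem
  · -- get a loop outside C
    exfalso
    set u : List α := (w.drop i).take (j - i) with hu
    have htj : w.take j = w.take i ++ u := by
      have : (j : ℕ) = i + (j - i) := by omega
      rw [this, List.take_add]
    have hulen : u.length = j - i := by
      have hj : (j : ℕ) ≤ w.length := by omega
      simp [hu, List.length_take, List.length_drop]
      omega
    have hune : u ≠ [] := by
      intro h
      rw [h] at hulen
      simp at hulen
      omega
    have hloop : M.evalFrom (M.evalFrom p (w.take i)) u = M.evalFrom p (w.take i) := by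
      rw [← M.evalFrom_of_append, ← htj, ← heq]
    exact no_loop_outside M C htriv _ hmem u hune hloop

/-- Long enough words act as constants on C. -/
lemma const_on_sink {α σ : Type*} [Fintype σ] (M : DFA α σ) (C : Set σ)
    (hCne : C.Nonempty)
    (hsink : ∀ q ∈ C, ∀ a : α, M.step q a ∈ C)
    (hnp : ∀ u : List α, u ≠ [] → NonPermutationalOn (fun q => M.evalFrom q u) C)
    (w : List α) (hw : w.length = Fintype.card (Set σ)) :
    ∃ c ∈ C, ∀ q ∈ C, M.evalFrom q w = c := by
  set N := Fintype.card (Set σ) with hN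
  set S : ℕ → Set σ := fun i => (fun q => M.evalFrom q (w.take i)) '' C with hS
  have hSsub : ∀ i, S i ⊆ C := by
    rintro i x ⟨q, hq, rfl⟩
    exact sink_closed M C hsink _ _ hq
  have hpig : ∃ i j : Fin (N + 1), i ≠ j ∧ S i = S j :=
    Fintype.exists_ne_map_eq_of_card_lt (fun i : Fin (N+1) => S i)
      (by rw [Fintype.card_fin, hN]; exact Nat.lt_succ_self _)
  obtain ⟨i, j, hij, heq⟩ := hpig
  wlog hlt : (i : ℕ) < (j : ℕ) generalizing i j
  · have hne' : (i:ℕ) ≠ (j:ℕ) := Fin.val_ne_of_ne hij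
    exact this j i hij.symm heq.symm (by omega)
  set u : List α := (w.drop i).take (j - i) with hu
  have htj : w.take j = w.take i ++ u := by
    have : (j : ℕ) = i + (j - i) := by omega
    rw [this, List.take_add]
  have hulen : u.length = j - i := by
    have hj : (j : ℕ) ≤ w.length := by omega
    simp [hu, List.length_take, List.length_drop]
    omega
  have hune : u ≠ [] := by
    intro h; rw [h] at hulen; simp at hulen; omega
  have himg : (fun q => M.evalFrom q u) '' S i = S i := by
    conv_rhs => rw [heq]
    rw [hS]
    simp only
    rw [← Set.image_comp]
    ext x
    constructor
    · rintro ⟨q, hq, rfl⟩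
      exact ⟨q, hq, by simp [Function.comp, htj, M.evalFrom_of_append]⟩
    · rintro ⟨q, hq, rfl⟩
      exact ⟨q, hq, by simp [Function.comp, htj, M.evalFrom_of_append]⟩
  have hfin : (S i).Finite := Set.toFinite _
  have hbij : Set.BijOn (fun q => M.evalFrom q u) (S i) (S i) := by
    have hmaps : Set.MapsTo (fun q => M.evalFrom q u) (S i) (S i) := by
      intro x hx; rw [← himg]; exact ⟨x, hx, rfl⟩
    have hsurj : Set.SurjOn (fun q => M.evalFrom q u) (S i) (S i) := by
      intro x hx; rw [← himg] at hx; exact hx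
    exact (Set.Finite.surjOn_iff_bijOn_of_mapsTo hfin hmaps).mp hsurj
  have hcard : (S i).ncard = 1 := by
    have h1 : ¬ 1 < (S i).ncard := fun h => hnp u hune ⟨S i, hSsub i, h, hbij⟩
    have hne : (S i).Nonempty := hCne.image _
    have := hne.ncard_pos hfin
    omega
  obtain ⟨c, hc⟩ := Set.ncard_eq_one.mp hcard
  -- final image is the image of S j under the rest of the word
  have hsplit : w = w.take j ++ w.drop j := (List.take_append_drop j w).symm
  have hcC : c ∈ C := hSsub i (hc ▸ rfl)
  refine ⟨M.evalFrom c (w.drop j), sink_closed M C hsink _ _ hcC, ?_⟩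
  intro q hq
  have hqj : M.evalFrom q (w.take j) = c := by
    have : M.evalFrom q (w.take j) ∈ S j := ⟨q, hq, rfl⟩
    rw [← heq, hc] at this
    simpa using this
  conv_lhs => rw [hsplit]
  rw [M.evalFrom_of_append, hqj]

theorem definite_of_unique_sink {α σ : Type*} [Fintype σ] (M : DFA α σ) (C : Set σ)
    (hC : IsSink M C)
    (huniq : ∀ D : Set σ, IsComponent M D → IsSink M D → D = C)
    (htriv : ∀ D : Set σ, IsComponent M D → D ≠ C → IsTrivialComponent M D)
    (hnp : ∀ u : List α, u ≠ [] → NonPermutationalOn (fun q => M.evalFrom q u) C) :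
    ∃ k : ℕ, ∀ x y : List α, y.length = k → (x ++ y ∈ M.accepts ↔ y ∈ M.accepts) := by
  obtain ⟨⟨p₀, hp₀⟩, hsink⟩ := hC
  have hCne : C.Nonempty := ⟨p₀, by rw [hp₀]; exact ⟨⟨[], rfl⟩, ⟨[], rfl⟩⟩⟩
  refine ⟨Fintype.card σ + Fintype.card (Set σ), ?_⟩
  intro x y hy
  set y₁ := y.take (Fintype.card σ) with hy₁
  set y₂ := y.drop (Fintype.card σ) with hy₂
  have hy₁len : y₁.length = Fintype.card σ := by
    simp only [hy₁, List.length_take, hy]; omega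
  have hy₂len : y₂.length = Fintype.card (Set σ) := by
    simp only [hy₂, List.length_drop, hy]; omega
  obtain ⟨c, hcC, hconst⟩ := const_on_sink M C hCne hsink hnp y₂ hy₂len
  have hkey : ∀ q : σ, M.evalFrom q y = c := by
    intro q
    have hsplit : y = y₁ ++ y₂ := (List.take_append_drop _ y).symm
    rw [hsplit, M.evalFrom_of_append]
    exact hconst _ (enters_sink M C hsink htriv q y₁ hy₁len)
  rw [DFA.mem_accepts, DFA.mem_accepts]
  have h1 : M.eval (x ++ y) = c := by
    rw [DFA.eval, M.evalFrom_of_append]; exact hkey _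
  have h2 : M.eval y = c := hkey _
  rw [h1, h2]
end

section
/- Let A be a DFA such that every nontrivial component is a sink and for each nonempty word u and each sink C, u acts non-permutationally on C. Then L(A) is generalized definite: there exists k such that for all x₁, x₂ ∈ Σ^k and y ∈ Σ*, x₁yx₂ ∈ L(A) ⟺ x₁x₂ ∈ L(A). -/
open Set in
private lemma sink_closed_word {α σ : Type*} (M : DFA α σ) {C : Set σ}
    (hC : ∀ q ∈ C, ∀ a : α, M.step q a ∈ C) :
    ∀ (w : List α), ∀ q ∈ C, M.evalFrom q w ∈ C := by
  intro w
  induction w with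
  | nil => intro q hq; simpa [DFA.evalFrom] using hq
  | cons a w ih =>
    intro q hq
    have : M.evalFrom q (a :: w) = M.evalFrom (M.step q a) w := rfl
    rw [this]
    exact ih _ (hC q hq a)

private lemma reach_sink {α σ : Type*} [Fintype σ] (M : DFA α σ)
    (hsink : ∀ C : Set σ, IsComponent M C → ¬ IsTrivialComponent M C → IsSink M C)
    (s : σ) (w : List α) (hw : Fintype.card σ ≤ w.length) :
    ∃ C : Set σ, IsSink M C ∧ M.evalFrom s w ∈ C := by
  classical
  set n := w.length with hn
  have hcard : Fintype.card σ < Fintype.card (Fin (n + 1)) := by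
    simp only [Fintype.card_fin]; omega
  obtain ⟨i, j, hij, heq⟩ :=
    Fintype.exists_ne_map_eq_of_card_lt (fun i : Fin (n + 1) => M.evalFrom s (w.take i)) hcard
  wlog hlt : (i : ℕ) < (j : ℕ) generalizing i j
  · exact this j i hij.symm heq.symm (by have := Fin.val_ne_of_ne hij; omega)
  set r := M.evalFrom s (w.take i) with hr
  set u := (w.drop i).take (j - i) with hu
  have hsplit : w.take j = w.take i ++ u := by
    rw [hu, ← List.take_add]
    congr 1; omega
  have hru : M.evalFrom r u = r := by
    rw [hr, ← DFA.evalFrom_of_append, ← hsplit, ← heq]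
  have hune : u ≠ [] := by
    have hjle : (j : ℕ) ≤ n := Fin.is_le j
    have hlen : u.length = min ((j : ℕ) - (i : ℕ)) (w.length - (i : ℕ)) := by
      rw [hu, List.length_take, List.length_drop]
    intro h
    rw [h, List.length_nil] at hlen
    rw [hn] at *
    omega
  set C : Set σ := {q | Reach M r q ∧ Reach M q r} with hCdef
  have hcomp : IsComponent M C := ⟨r, rfl⟩
  have hrC : r ∈ C := ⟨⟨[], rfl⟩, ⟨[], rfl⟩⟩
  have hnt : ¬ IsTrivialComponent M C := by
    rintro ⟨-, p, hCp, hstep⟩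
    have hpr : p = r := by
      have := hrC; rw [hCp] at this; exact this.symm
    rw [hpr] at hCp hstep
    obtain ⟨a, u', hcons⟩ := List.exists_cons_of_ne_nil hune
    rw [hcons] at hru
    have hstep1 : M.evalFrom (M.step r a) u' = r := hru
    have hq'C : M.step r a ∈ C := ⟨⟨[a], rfl⟩, ⟨u', hstep1⟩⟩
    rw [hCp] at hq'C
    exact hstep a hq'C
  have hCsink : IsSink M C := hsink C hcomp hnt
  refine ⟨C, hCsink, ?_⟩
  have hws : w = w.take i ++ w.drop i := (List.take_append_drop _ _).symm
  have : M.evalFrom s w = M.evalFrom r (w.drop i) := by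
    conv_lhs => rw [hws]
    rw [DFA.evalFrom_of_append, hr]
  rw [this]
  exact sink_closed_word M hCsink.2 _ r hrC

open Set in
private lemma sink_constancy {α σ : Type*} [Fintype σ] (M : DFA α σ)
    (hnp : ∀ u : List α, u ≠ [] → ∀ C : Set σ, IsSink M C →
      NonPermutationalOn (fun q => M.evalFrom q u) C)
    {C : Set σ} (hC : IsSink M C) (w : List α)
    (hw : 2 ^ Fintype.card σ ≤ w.length) :
    ∀ p ∈ C, ∀ q ∈ C, M.evalFrom p w = M.evalFrom q w := by
  classical
  set n := w.length with hn
  set A : ℕ → Set σ := fun i => (fun q => M.evalFrom q (w.take i)) '' C with hA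
  have hchain : ∀ i j : ℕ, i ≤ j →
      A j = (fun q => M.evalFrom q ((w.drop i).take (j - i))) '' A i := by
    intro i j hij
    rw [hA]
    simp only
    rw [Set.image_image]
    have : w.take j = w.take i ++ (w.drop i).take (j - i) := by
      rw [← List.take_add]; congr 1; omega
    rw [this]
    apply Set.image_congr
    intro q _
    rw [DFA.evalFrom_of_append]
  have hAsub : ∀ i, A i ⊆ C := by
    rintro i x ⟨q, hq, rfl⟩
    exact sink_closed_word M hC.2 _ q hq
  by_cases hone : ∃ i ≤ n, (A i).ncard ≤ 1
  · obtain ⟨i, hin, hile⟩ := hone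
    have hAn : (A n).ncard ≤ 1 := by
      rw [hchain i n hin]
      exact le_trans (Set.ncard_image_le (Set.toFinite _)) hile
    intro p hp q hq
    have hp' : M.evalFrom p w ∈ A n := by
      refine ⟨p, hp, ?_⟩; simp [hn]
    have hq' : M.evalFrom q w ∈ A n := by
      refine ⟨q, hq, ?_⟩; simp [hn]
    exact (Set.ncard_le_one (Set.toFinite _)).mp hAn _ hp' _ hq'
  · exfalso
    push_neg at hone
    have hcard : Fintype.card (Finset σ) < Fintype.card (Fin (n + 1)) := by
      rw [Fintype.card_finset, Fintype.card_fin]; omega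
    obtain ⟨i, j, hij, heq⟩ :=
      Fintype.exists_ne_map_eq_of_card_lt
        (fun i : Fin (n + 1) => (Set.toFinite (A i)).toFinset) hcard
    wlog hlt : (i : ℕ) < (j : ℕ) generalizing i j
    · exact this j i hij.symm heq.symm (by have := Fin.val_ne_of_ne hij; omega)
    have hAij : A i = A j := (Set.Finite.toFinset_inj).mp heq
    set u := (w.drop i).take (j - i) with hu
    have hune : u ≠ [] := by
      have hjle : (j : ℕ) ≤ n := Fin.is_le j
      have hlen : u.length = min ((j : ℕ) - (i : ℕ)) (w.length - (i : ℕ)) := by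
        rw [hu, List.length_take, List.length_drop]
      intro h
      rw [h, List.length_nil] at hlen
      rw [hn] at *
      omega
    have himg : (fun q => M.evalFrom q u) '' (A i) = A i := by
      conv_rhs => rw [hAij, hchain i j (le_of_lt hlt)]
    have hmaps : Set.MapsTo (fun q => M.evalFrom q u) (A i) (A i) := by
      intro x hx
      rw [← himg]
      exact Set.mem_image_of_mem _ hx
    have hsurj : Set.SurjOn (fun q => M.evalFrom q u) (A i) (A i) := by
      rw [Set.SurjOn, himg]
    have hbij : Set.BijOn (fun q => M.evalFrom q u) (A i) (A i) :=
      ((Set.Finite.surjOn_iff_bijOn_of_mapsTo (Set.toFinite _) hmaps)).mp hsurj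
    have h2 : 1 < (A i).ncard := hone i (by omega)
    exact hnp u hune C hC ⟨A i, hAsub i, h2, hbij⟩

theorem genDefinite_of_sink_structure {α σ : Type*} [Fintype σ] (M : DFA α σ)
    (hsink : ∀ C : Set σ, IsComponent M C → ¬ IsTrivialComponent M C → IsSink M C)
    (hnp : ∀ u : List α, u ≠ [] → ∀ C : Set σ, IsSink M C →
      NonPermutationalOn (fun q => M.evalFrom q u) C) :
    ∃ k : ℕ, ∀ x₁ x₂ y : List α, x₁.length = k → x₂.length = k →
      (x₁ ++ y ++ x₂ ∈ M.accepts ↔ x₁ ++ x₂ ∈ M.accepts) := by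
  classical
  refine ⟨Fintype.card σ + 2 ^ Fintype.card σ, ?_⟩
  intro x₁ x₂ y h1 h2
  obtain ⟨C, hCsink, hmem⟩ := reach_sink M hsink M.start x₁ (h1 ▸ Nat.le_add_right _ _)
  have hconst := sink_constancy M hnp hCsink x₂ (h2 ▸ Nat.le_add_left _ _)
  have hy : M.evalFrom (M.evalFrom M.start x₁) y ∈ C :=
    sink_closed_word M hCsink.2 y _ hmem
  have key : M.evalFrom M.start (x₁ ++ y ++ x₂) = M.evalFrom M.start (x₁ ++ x₂) := by
    rw [DFA.evalFrom_of_append, DFA.evalFrom_of_append, DFA.evalFrom_of_append]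
    exact hconst _ hy _ hmem
  simp only [DFA.mem_accepts, DFA.eval]
  rw [key]
end
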